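/- arXiv:1510.07105 — 3 statements merged into one kernel-verified Lean document; each statement's English description precedes it below -/
import Mathlib

section
/- Let V : ℝ² → ℝ² be continuous and suppose there exists γ > 0 such that for all 0 ≤ s < s' ≤ T, ‖(1/(s'-s)) ∫ₛ^{s'} V(X_{x₀}(t)) dt‖ ≥ γ, where X_{x₀} solves X' = V(X), X(0) = x₀. Then for any x ∈ ℝ² and h > 0, the Lebesgue measure of the set A = {s ∈ [0,T] : ‖X_{x₀}(s) - x‖ ≤ h} is at most 2h/γ. -/
open MeasureTheory

theorem stmt_8 (T γ : ℝ) (hT : 0 ≤ T) (hγ : 0 < γ)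
    (V : EuclideanSpace ℝ (Fin 2) → EuclideanSpace ℝ (Fin 2)) (hV : Continuous V)
    (X : ℝ → EuclideanSpace ℝ (Fin 2))
    (hX : ∀ s s' : ℝ, 0 ≤ s → s ≤ s' → s' ≤ T →
      X s' - X s = ∫ t in s..s', V (X t))
    (havg : ∀ s s' : ℝ, 0 ≤ s → s < s' → s' ≤ T →
      γ ≤ ‖(1 / (s' - s)) • ∫ t in s..s', V (X t)‖)
    (x : EuclideanSpace ℝ (Fin 2)) (h : ℝ) (hh : 0 < h) :
    volume {s | s ∈ Set.Icc 0 T ∧ ‖X s - x‖ ≤ h} ≤ ENNReal.ofReal (2 * h / γ) := by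
  set A := {s | s ∈ Set.Icc 0 T ∧ ‖X s - x‖ ≤ h} with hA
  rcases A.eq_empty_or_nonempty with hne | hne
  · simp [hne]
  have hbddA : BddAbove A := ⟨T, fun s hs => hs.1.2⟩
  have hbddB : BddBelow A := ⟨0, fun s hs => hs.1.1⟩
  have key : sSup A - sInf A ≤ 2 * h / γ := by
    apply le_of_forall_pos_le_add
    intro ε hε
    obtain ⟨b, hbA, hb⟩ := exists_lt_of_lt_csSup hne
      (show sSup A - ε / 2 < sSup A by linarith)
    obtain ⟨a, haA, ha⟩ := exists_lt_of_csInf_lt hne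
      (show sInf A < sInf A + ε / 2 by linarith)
    have hdiff : b - a ≤ 2 * h / γ := by
      rcases le_or_gt b a with hba | hab
      · have : 0 ≤ 2 * h / γ := by positivity
        linarith
      · have hba : (0:ℝ) < b - a := sub_pos.mpr hab
        have h1 := havg a b haA.1.1 hab hbA.1.2
        rw [← hX a b haA.1.1 hab.le hbA.1.2] at h1
        rw [norm_smul, Real.norm_eq_abs, abs_of_pos (by positivity : (0:ℝ) < 1 / (b - a)), one_div] at h1
        have h2 : ‖X b - X a‖ ≤ 2 * h := by
          calc ‖X b - X a‖ = ‖(X b - x) - (X a - x)‖ := by congr 1; abel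
            _ ≤ ‖X b - x‖ + ‖X a - x‖ := norm_sub_le _ _
            _ ≤ h + h := add_le_add hbA.2 haA.2
            _ = 2 * h := by ring
        have h3 : γ * (b - a) ≤ ‖X b - X a‖ := by
          calc γ * (b - a) ≤ ((b - a)⁻¹ * ‖X b - X a‖) * (b - a) :=
                mul_le_mul_of_nonneg_right h1 hba.le
            _ = ‖X b - X a‖ := by field_simp
        rw [le_div_iff₀ hγ]
        nlinarith
    have hs1 : sSup A ≤ b + ε / 2 := by linarith
    have hs2 : sInf A ≥ a - ε / 2 := by linarith
    linarith
  calc volume A ≤ volume (Set.Icc (sInf A) (sSup A)) :=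
        measure_mono (fun s hs => ⟨csInf_le hbddB hs, le_csSup hbddA hs⟩)
    _ = ENNReal.ofReal (sSup A - sInf A) := by rw [Real.volume_Icc]
    _ ≤ _ := ENNReal.ofReal_le_ofReal key
end

section
/- Let b₁ > 1 and define, for a = (A₁, A₂, A₃) ∈ ℝ³ with a ≠ 0, the symmetric 2×2 matrix Ω with entries ω₁₁ = b₁A₁² + A₂² + A₃² + 2A₁A₃, ω₁₂ = ω₂₁ = 2A₁A₂ + 2A₂A₃, ω₂₂ = b₁A₃² + A₂² + A₁² + 2A₁A₃. Then Ω is positive definite provided (A₁ + A₃, A₂) ≠ (0,0) or (A₁, A₃) ≠ (0,0); in particular Ω is positive definite whenever a ≠ 0. -/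
theorem stmt_10 (b₁ : ℝ) (hb : 1 < b₁) (A₁ A₂ A₃ : ℝ)
    (hA : ¬(A₁ = 0 ∧ A₂ = 0 ∧ A₃ = 0)) :
    Matrix.PosDef
      (Matrix.of ![![b₁ * A₁^2 + A₂^2 + A₃^2 + 2 * A₁ * A₃,
                    2 * A₁ * A₂ + 2 * A₂ * A₃],
                  ![2 * A₁ * A₂ + 2 * A₂ * A₃,
                    b₁ * A₃^2 + A₂^2 + A₁^2 + 2 * A₁ * A₃]]) := by
  rw [Matrix.posDef_iff_dotProduct_mulVec]
  constructor
  · ext i j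
    fin_cases i <;> fin_cases j <;> simp [Matrix.conjTranspose_apply]
  · intro x hx
    have hx' : x 0 ≠ 0 ∨ x 1 ≠ 0 := by
      by_contra h
      push_neg at h
      exact hx (by ext i; fin_cases i <;> simp [h.1, h.2])
    simp only [Matrix.mulVec, dotProduct, Fin.sum_univ_two, Matrix.of_apply,
      Matrix.cons_val', Matrix.cons_val_zero, Matrix.cons_val_one, Matrix.head_cons,
      Matrix.head_fin_const, Matrix.empty_val', Matrix.cons_val_fin_one, Pi.star_apply,
      RCLike.star_def, starRingEnd_apply, star_trivial]
    set u := x 0 with hu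
    set v := x 1 with hv
    by_contra hQ
    push_neg at hQ
    have key : u * ((b₁ * A₁ ^ 2 + A₂ ^ 2 + A₃ ^ 2 + 2 * A₁ * A₃) * u + (2 * A₁ * A₂ + 2 * A₂ * A₃) * v) +
        v * ((2 * A₁ * A₂ + 2 * A₂ * A₃) * u + (b₁ * A₃ ^ 2 + A₂ ^ 2 + A₁ ^ 2 + 2 * A₁ * A₃) * v)
        = (b₁ - 1) * (A₁ * u) ^ 2 + (b₁ - 1) * (A₃ * v) ^ 2
          + ((A₁ + A₃) * u + A₂ * v) ^ 2 + (A₂ * u + (A₁ + A₃) * v) ^ 2 := by ring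
    rw [key] at hQ
    have hb' : (0:ℝ) < b₁ - 1 := by linarith
    have n1 := mul_nonneg hb'.le (sq_nonneg (A₁ * u))
    have n2 := mul_nonneg hb'.le (sq_nonneg (A₃ * v))
    have n3 := sq_nonneg ((A₁ + A₃) * u + A₂ * v)
    have n4 := sq_nonneg (A₂ * u + (A₁ + A₃) * v)
    have e1 : A₁ * u = 0 := by
      have h1 : (A₁ * u) ^ 2 ≤ 0 := by nlinarith [sq_nonneg (A₁ * u)]
      exact (pow_eq_zero_iff two_ne_zero).mp (le_antisymm h1 (sq_nonneg _))
    have e2 : A₃ * v = 0 := by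
      have h1 : (A₃ * v) ^ 2 ≤ 0 := by nlinarith [sq_nonneg (A₃ * v)]
      exact (pow_eq_zero_iff two_ne_zero).mp (le_antisymm h1 (sq_nonneg _))
    have e3 : (A₁ + A₃) * u + A₂ * v = 0 := by
      have h1 : ((A₁ + A₃) * u + A₂ * v) ^ 2 ≤ 0 := by nlinarith
      exact (pow_eq_zero_iff two_ne_zero).mp (le_antisymm h1 n3)
    have e4 : A₂ * u + (A₁ + A₃) * v = 0 := by
      have h1 : (A₂ * u + (A₁ + A₃) * v) ^ 2 ≤ 0 := by nlinarith
      exact (pow_eq_zero_iff two_ne_zero).mp (le_antisymm h1 n4)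
    apply hA
    rcases hx' with h | h
    · have hA1 : A₁ = 0 := by
        rcases mul_eq_zero.mp e1 with h' | h'
        · exact h'
        · exact absurd h' h
      have hA2 : A₂ = 0 := by
        have : A₂ * u = 0 := by rw [hA1] at e4; linarith [e4, e2]
        rcases mul_eq_zero.mp this with h' | h'
        · exact h'
        · exact absurd h' h
      have hA3 : A₃ = 0 := by
        have : A₃ * u = 0 := by rw [hA1, hA2] at e3; linarith [e3]
        rcases mul_eq_zero.mp this with h' | h'
        · exact h'
        · exact absurd h' h
      exact ⟨hA1, hA2, hA3⟩
    · have hA3 : A₃ = 0 := by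
        rcases mul_eq_zero.mp e2 with h' | h'
        · exact h'
        · exact absurd h' h
      have hA2 : A₂ = 0 := by
        have : A₂ * v = 0 := by rw [hA3] at e3; linarith [e3, e1]
        rcases mul_eq_zero.mp this with h' | h'
        · exact h'
        · exact absurd h' h
      have hA1 : A₁ = 0 := by
        have : A₁ * v = 0 := by rw [hA3, hA2] at e4; linarith [e4]
        rcases mul_eq_zero.mp this with h' | h'
        · exact h'
        · exact absurd h' h
      exact ⟨hA1, hA2, hA3⟩
end

section
/- For δ > 0 there exist finitely many open balls B₁, …, B_N contained in the open unit ball B(0,1) ⊂ ℝ² such that for every y ∈ ℝ² with ‖y‖ > δ, at least one ball B_i is contained in B(0,1) \ B(-y,1). -/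
open Metric

theorem stmt_18 (δ : ℝ) (hδ : 0 < δ) :
    ∃ (N : ℕ) (c : Fin N → EuclideanSpace ℝ (Fin 2)) (r : Fin N → ℝ),
      (∀ i, 0 < r i ∧ ball (c i) (r i) ⊆ ball (0 : EuclideanSpace ℝ (Fin 2)) 1) ∧
      ∀ y : EuclideanSpace ℝ (Fin 2), δ < ‖y‖ →
        ∃ i, ball (c i) (r i) ⊆ ball (0 : EuclideanSpace ℝ (Fin 2)) 1 \ ball (-y) 1 := by
  classical
  set E := EuclideanSpace ℝ (Fin 2)
  set d : ℝ := min δ 1 with hdd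
  have hd0 : 0 < d := lt_min hδ one_pos
  have hd1 : d ≤ 1 := min_le_right _ _
  have hdδ : d ≤ δ := min_le_left _ _
  set ε : ℝ := d / 8 with hεd
  have hε : 0 < ε := by positivity
  obtain ⟨s, hs_sub, hs_fin, hs_cov⟩ :=
    (isCompact_sphere (0 : E) 1).finite_cover_balls hε
  haveI : Fintype s := hs_fin.fintype
  set t : ℝ := 1 - d / 4 with htd
  have ht0 : 0 < t := by simp only [htd]; linarith
  have ht1 : t ≤ 1 := by simp only [htd]; linarith
  set e : s ≃ Fin (Fintype.card s) := Fintype.equivFin s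
  -- common containment lemma
  have hball : ∀ p : E, p ∈ s → ball (t • p) ε ⊆ ball (0 : E) 1 := by
    intro p hp z hz
    have hpn : ‖p‖ = 1 := by
      have := hs_sub hp
      simpa using this
    have hcn : ‖t • p‖ = t := by
      rw [norm_smul, hpn, Real.norm_eq_abs, abs_of_pos ht0, mul_one]
    have : ‖z‖ ≤ ‖z - t • p‖ + ‖t • p‖ := by
      simpa using norm_add_le (z - t • p) (t • p)
    rw [mem_ball, dist_eq_norm] at hz
    rw [mem_ball, dist_zero_right]
    rw [hcn] at this
    have : ‖z‖ < ε + t := by linarith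
    simp only [hεd, htd] at this ⊢
    linarith
  refine ⟨Fintype.card s, fun i => t • ((e.symm i : E)), fun _ => ε, ?_, ?_⟩
  · intro i
    exact ⟨hε, hball _ (e.symm i).2⟩
  · intro y hy
    have hyd : d < ‖y‖ := lt_of_le_of_lt hdδ hy
    have hy0 : (0:ℝ) < ‖y‖ := lt_trans hd0 hyd
    have hyne : ‖y‖ ≠ 0 := ne_of_gt hy0
    set u : E := ‖y‖⁻¹ • y with hu
    have hun : u ∈ sphere (0 : E) 1 := by
      simp [hu, norm_smul, abs_of_pos (inv_pos.mpr hy0), inv_mul_cancel₀ hyne]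
    obtain ⟨p, hp, hup⟩ := Set.mem_iUnion₂.1 (hs_cov hun)
    refine ⟨e ⟨p, hp⟩, ?_⟩
    simp only [Equiv.symm_apply_apply]
    intro z hz
    refine ⟨hball p hp hz, ?_⟩
    -- show z ∉ ball (-y) 1
    rw [mem_ball, dist_eq_norm] at hz
    have hupn : ‖u - p‖ < ε := by
      rw [mem_ball, dist_eq_norm] at hup; exact hup
    have key : ‖t • u + y‖ = t + ‖y‖ := by
      have : t • u + y = (t * ‖y‖⁻¹ + 1) • y := by
        rw [hu, add_smul, one_smul, smul_smul]
      rw [this, norm_smul, Real.norm_eq_abs]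
      have hpos : 0 < t * ‖y‖⁻¹ + 1 := by positivity
      rw [abs_of_pos hpos]
      field_simp
    have htri : ‖t • u + y‖ ≤ ‖z + y‖ + ‖z - t • p‖ + ‖t • (p - u)‖ := by
      have : t • u + y = (z + y) - (z - t • p) - t • (p - u) := by
        simp [smul_sub]; abel
      rw [this]
      calc ‖(z + y) - (z - t • p) - t • (p - u)‖
          ≤ ‖(z + y) - (z - t • p)‖ + ‖t • (p - u)‖ := norm_sub_le _ _
        _ ≤ ‖z + y‖ + ‖z - t • p‖ + ‖t • (p - u)‖ := by
            have := norm_sub_le (z + y) (z - t • p); linarith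
    have hpu : ‖t • (p - u)‖ < ε := by
      rw [norm_smul, Real.norm_eq_abs, abs_of_pos ht0]
      have h1 : ‖p - u‖ < ε := by rw [norm_sub_rev]; exact hupn
      calc t * ‖p - u‖ ≤ 1 * ‖p - u‖ := by
            apply mul_le_mul_of_nonneg_right ht1 (norm_nonneg _)
        _ < ε := by rw [one_mul]; exact h1
    have hzy : 1 < ‖z + y‖ := by
      have : t + ‖y‖ ≤ ‖z + y‖ + ‖z - t • p‖ + ‖t • (p - u)‖ := key ▸ htri
      simp only [htd, hεd] at this hz hpu
      linarith
    intro hmem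
    rw [mem_ball, dist_eq_norm, sub_neg_eq_add] at hmem
    linarith
end
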